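/- For every α ∈ Λ²₁₄ one has α ∧ α ∧ φ₀ = −|α|²·vol₇, where |α|² is the sum of the squares of the coefficients of α in the standard basis of 2-forms e*_i ∧ e*_j (i < j) dual to the coordinate basis of ℝ⁷. In particular α ∧ α ∧ φ₀ is a negative multiple of vol₇ for every nonzero α ∈ Λ²₁₄. -/

import Mathlib

/- STATEMENT 3: for every α ∈ Λ²₁₄ one has α ∧ α ∧ φ₀ = −|α|²·vol₇, where |α|² is the sum of
the squares of the coefficients of α in the standard basis e*_i ∧ e*_j (i < j) of 2-forms.
In particular α ∧ α ∧ φ₀ is a negative multiple of vol₇ for every nonzero α ∈ Λ²₁₄.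

We identify `(ℝ⁷)*` with `ℝ⁷` via the standard basis, so forms are elements of the exterior
algebra of `V7 = Fin 7 → ℝ` (wedge = multiplication).  A general 2-form is written (uniquely)
as `∑_{i<j} a i j • (ε i * ε j)`, and we quantify over its coefficient functions `a`. -/

noncomputable section
open ExteriorAlgebra

abbrev V7 : Type := Fin 7 → ℝ
abbrev E7 : Type := ExteriorAlgebra ℝ V7

def ε (i : Fin 7) : E7 := ExteriorAlgebra.ι ℝ (Pi.single i 1)

/-- Contraction (interior product) `ι_v` with the vector `v`, in the first slot. -/
def ctr (v : V7) : E7 →ₗ[ℝ] E7 :=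
  CliffordAlgebra.contractLeft ((Pi.basisFun ℝ (Fin 7)).toDual v)

def ω : E7 := ε 1 * ε 2 + ε 3 * ε 4 + ε 5 * ε 6
def ρ : E7 := -(ε 2 * ε 4 * ε 6) + ε 2 * ε 3 * ε 5 + ε 1 * ε 4 * ε 5 + ε 1 * ε 3 * ε 6
def φ₀ : E7 := ω * ε 0 + ρ
def vol7 : E7 := ε 0 * ε 1 * ε 2 * ε 3 * ε 4 * ε 5 * ε 6

/-- `Λ²₁₄ = {α a 2-form : α ∧ ι_vφ₀ ∧ φ₀ = 0 for all v}`. -/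
def Λ14 : Submodule ℝ E7 where
  carrier := {α | α ∈ ⋀[ℝ]^2 V7 ∧ ∀ v : V7, α * ctr v φ₀ * φ₀ = 0}
  add_mem' := by
    rintro a b ⟨ha2, ha⟩ ⟨hb2, hb⟩
    exact ⟨add_mem ha2 hb2, fun v => by rw [add_mul, add_mul, ha v, hb v, add_zero]⟩
  zero_mem' := ⟨zero_mem _, fun v => by rw [zero_mul, zero_mul]⟩
  smul_mem' := by
    rintro c a ⟨ha2, ha⟩
    exact ⟨Submodule.smul_mem _ c ha2,
      fun v => by rw [smul_mul_assoc, smul_mul_assoc, ha v, smul_zero]⟩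


lemma εsq (i : Fin 7) : ε i * ε i = 0 := ι_sq_zero _
lemma εswap {i j : Fin 7} (_h : j < i) : ε i * ε j = -(ε j * ε i) := by
  have := ExteriorAlgebra.ι_add_mul_swap (R := ℝ) (Pi.single i (1:ℝ) : V7) (Pi.single j 1 : V7)
  unfold ε; linear_combination (norm := module) this
lemma εsq' (i : Fin 7) (x : E7) : ε i * (ε i * x) = 0 := by
  rw [← mul_assoc, εsq, zero_mul]
lemma εswap' {i j : Fin 7} (h : j < i) (x : E7) : ε i * (ε j * x) = -(ε j * (ε i * x)) := by
  rw [← mul_assoc, εswap h, neg_mul, mul_assoc]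

lemma toDual_single (v : V7) (i : Fin 7) :
    ((Pi.basisFun ℝ (Fin 7)).toDual v) (Pi.single i 1) = v i := by
  have : (Pi.single i 1 : V7) = Pi.basisFun ℝ (Fin 7) i := by
    simp [Pi.basisFun_apply]
  rw [this, Module.Basis.toDual_apply_left]
  simp

lemma ctr_ε (v : V7) (i : Fin 7) : ctr v (ε i) = algebraMap ℝ E7 (v i) := by
  rw [ctr, ε, CliffordAlgebra.contractLeft_ι, toDual_single]

lemma ctr_ε_mul (v : V7) (i : Fin 7) (x : E7) :
    ctr v (ε i * x) = v i • x - ε i * ctr v x := by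
  rw [ctr, ε, CliffordAlgebra.contractLeft_ι_mul, toDual_single]

def M : E7 := ε 0 * (ε 1 * (ε 2 * (ε 3 * (ε 4 * (ε 5 * ε 6)))))

lemma vol7_eq : vol7 = M := by rw [vol7, M]; simp only [mul_assoc]

lemma M_ne : M ≠ 0 := by
  intro h
  have h0 := congrArg (ctr (Pi.single 0 1)) h
  have h1 := congrArg (ctr (Pi.single 1 1)) h0
  have h2 := congrArg (ctr (Pi.single 2 1)) h1
  have h3 := congrArg (ctr (Pi.single 3 1)) h2
  have h4 := congrArg (ctr (Pi.single 4 1)) h3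
  have h5 := congrArg (ctr (Pi.single 5 1)) h4
  have h6 := congrArg (ctr (Pi.single 6 1)) h5
  simp (config := { decide := true }) only [M, ctr_ε_mul, ctr_ε, Pi.single_apply, if_true,
    if_false, one_smul, zero_smul, map_zero, map_sub, map_smul, mul_zero, zero_mul, sub_zero,
    zero_sub, smul_sub, smul_zero, mul_sub, map_neg, mul_neg, neg_zero, neg_neg, map_one,
    reduceIte, smul_neg] at h6
  exact one_ne_zero h6

lemma smul_M_eq_zero {c : ℝ} (h : c • M = 0) : c = 0 :=
  (smul_eq_zero.mp h).resolve_right M_ne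

lemma ctrphi0 : ctr (Pi.single 0 1) φ₀ = ε 1 * ε 2 + ε 3 * ε 4 + ε 5 * ε 6 := by
  simp (config := { decide := true }) only [φ₀, ω, ρ, map_add, map_neg, mul_assoc, εswap, εswap', εsq, εsq',
    add_mul, ctr_ε_mul, ctr_ε, Pi.single_apply, reduceIte, one_smul, zero_smul, map_zero, mul_zero,
    zero_sub, sub_zero, mul_one, mul_neg, neg_neg, neg_zero, map_one, map_ofNat, Fin.isValue,
    add_zero, zero_add, one_mul, Algebra.algebraMap_eq_smul_one, smul_zero]
  try module

lemma ctrphi1 : ctr (Pi.single 1 1) φ₀ = -(ε 0 * ε 2) + ε 4 * ε 5 + ε 3 * ε 6 := by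
  simp (config := { decide := true }) only [φ₀, ω, ρ, map_add, map_neg, mul_assoc, εswap, εswap', εsq, εsq',
    add_mul, ctr_ε_mul, ctr_ε, Pi.single_apply, reduceIte, one_smul, zero_smul, map_zero, mul_zero,
    zero_sub, sub_zero, mul_one, mul_neg, neg_neg, neg_zero, map_one, map_ofNat, Fin.isValue,
    add_zero, zero_add, one_mul, Algebra.algebraMap_eq_smul_one, smul_zero]
  try module

lemma ctrphi2 : ctr (Pi.single 2 1) φ₀ = ε 0 * ε 1 + -(ε 4 * ε 6) + ε 3 * ε 5 := by
  simp (config := { decide := true }) only [φ₀, ω, ρ, map_add, map_neg, mul_assoc, εswap, εswap', εsq, εsq',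
    add_mul, ctr_ε_mul, ctr_ε, Pi.single_apply, reduceIte, one_smul, zero_smul, map_zero, mul_zero,
    zero_sub, sub_zero, mul_one, mul_neg, neg_neg, neg_zero, map_one, map_ofNat, Fin.isValue,
    add_zero, zero_add, one_mul, Algebra.algebraMap_eq_smul_one, smul_zero]
  try module

lemma ctrphi3 : ctr (Pi.single 3 1) φ₀ = -(ε 0 * ε 4) + -(ε 2 * ε 5) + -(ε 1 * ε 6) := by
  simp (config := { decide := true }) only [φ₀, ω, ρ, map_add, map_neg, mul_assoc, εswap, εswap', εsq, εsq',
    add_mul, ctr_ε_mul, ctr_ε, Pi.single_apply, reduceIte, one_smul, zero_smul, map_zero, mul_zero,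
    zero_sub, sub_zero, mul_one, mul_neg, neg_neg, neg_zero, map_one, map_ofNat, Fin.isValue,
    add_zero, zero_add, one_mul, Algebra.algebraMap_eq_smul_one, smul_zero]
  try module

lemma ctrphi4 : ctr (Pi.single 4 1) φ₀ = ε 0 * ε 3 + ε 2 * ε 6 + -(ε 1 * ε 5) := by
  simp (config := { decide := true }) only [φ₀, ω, ρ, map_add, map_neg, mul_assoc, εswap, εswap', εsq, εsq',
    add_mul, ctr_ε_mul, ctr_ε, Pi.single_apply, reduceIte, one_smul, zero_smul, map_zero, mul_zero,
    zero_sub, sub_zero, mul_one, mul_neg, neg_neg, neg_zero, map_one, map_ofNat, Fin.isValue,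
    add_zero, zero_add, one_mul, Algebra.algebraMap_eq_smul_one, smul_zero]
  try module

lemma ctrphi5 : ctr (Pi.single 5 1) φ₀ = -(ε 0 * ε 6) + ε 2 * ε 3 + ε 1 * ε 4 := by
  simp (config := { decide := true }) only [φ₀, ω, ρ, map_add, map_neg, mul_assoc, εswap, εswap', εsq, εsq',
    add_mul, ctr_ε_mul, ctr_ε, Pi.single_apply, reduceIte, one_smul, zero_smul, map_zero, mul_zero,
    zero_sub, sub_zero, mul_one, mul_neg, neg_neg, neg_zero, map_one, map_ofNat, Fin.isValue,
    add_zero, zero_add, one_mul, Algebra.algebraMap_eq_smul_one, smul_zero]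
  try module

lemma ctrphi6 : ctr (Pi.single 6 1) φ₀ = ε 0 * ε 5 + -(ε 2 * ε 4) + ε 1 * ε 3 := by
  simp (config := { decide := true }) only [φ₀, ω, ρ, map_add, map_neg, mul_assoc, εswap, εswap', εsq, εsq',
    add_mul, ctr_ε_mul, ctr_ε, Pi.single_apply, reduceIte, one_smul, zero_smul, map_zero, mul_zero,
    zero_sub, sub_zero, mul_one, mul_neg, neg_neg, neg_zero, map_one, map_ofNat, Fin.isValue,
    add_zero, zero_add, one_mul, Algebra.algebraMap_eq_smul_one, smul_zero]
  try module


set_option maxHeartbeats 4000000 in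
lemma key (a : Fin 7 → Fin 7 → ℝ)
    (h : (∑ i, ∑ j, if i < j then a i j • (ε i * ε j) else 0) ∈ Λ14) :
    (∑ i, ∑ j, if i < j then a i j • (ε i * ε j) else 0) *
        (∑ i, ∑ j, if i < j then a i j • (ε i * ε j) else 0) * φ₀ =
      (-(∑ i, ∑ j, if i < j then (a i j) ^ 2 else 0)) • vol7 := by
  have h0 := h.2 (Pi.single 0 1)
  rw [ctrphi0] at h0
  simp (config := { decide := true }) only [Fin.sum_univ_seven, reduceIte, φ₀, ω, ρ,
      mul_add, add_mul, mul_neg, neg_mul, mul_zero, zero_mul, add_zero, zero_add, neg_neg, neg_zero,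
      smul_mul_assoc, mul_smul_comm, smul_smul, smul_add, smul_neg, smul_zero, zero_smul,
      mul_assoc, εswap, εswap', εsq, εsq'] at h0
  have hs0 : (2*a 1 2 + 2*a 3 4 + 2*a 5 6 : ℝ) = 0 := by
    apply smul_M_eq_zero
    rw [M]
    linear_combination (norm := module) h0
  clear h0
  have h1 := h.2 (Pi.single 1 1)
  rw [ctrphi1] at h1
  simp (config := { decide := true }) only [Fin.sum_univ_seven, reduceIte, φ₀, ω, ρ,
      mul_add, add_mul, mul_neg, neg_mul, mul_zero, zero_mul, add_zero, zero_add, neg_neg, neg_zero,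
      smul_mul_assoc, mul_smul_comm, smul_smul, smul_add, smul_neg, smul_zero, zero_smul,
      mul_assoc, εswap, εswap', εsq, εsq'] at h1
  have hs1 : (-(2*a 0 2) + 2*a 4 5 + 2*a 3 6 : ℝ) = 0 := by
    apply smul_M_eq_zero
    rw [M]
    linear_combination (norm := module) h1
  clear h1
  have h2 := h.2 (Pi.single 2 1)
  rw [ctrphi2] at h2
  simp (config := { decide := true }) only [Fin.sum_univ_seven, reduceIte, φ₀, ω, ρ,
      mul_add, add_mul, mul_neg, neg_mul, mul_zero, zero_mul, add_zero, zero_add, neg_neg, neg_zero,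
      smul_mul_assoc, mul_smul_comm, smul_smul, smul_add, smul_neg, smul_zero, zero_smul,
      mul_assoc, εswap, εswap', εsq, εsq'] at h2
  have hs2 : (2*a 0 1 - 2*a 4 6 + 2*a 3 5 : ℝ) = 0 := by
    apply smul_M_eq_zero
    rw [M]
    linear_combination (norm := module) h2
  clear h2
  have h3 := h.2 (Pi.single 3 1)
  rw [ctrphi3] at h3
  simp (config := { decide := true }) only [Fin.sum_univ_seven, reduceIte, φ₀, ω, ρ,
      mul_add, add_mul, mul_neg, neg_mul, mul_zero, zero_mul, add_zero, zero_add, neg_neg, neg_zero,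
      smul_mul_assoc, mul_smul_comm, smul_smul, smul_add, smul_neg, smul_zero, zero_smul,
      mul_assoc, εswap, εswap', εsq, εsq'] at h3
  have hs3 : (-(2*a 0 4) - 2*a 2 5 - 2*a 1 6 : ℝ) = 0 := by
    apply smul_M_eq_zero
    rw [M]
    linear_combination (norm := module) h3
  clear h3
  have h4 := h.2 (Pi.single 4 1)
  rw [ctrphi4] at h4
  simp (config := { decide := true }) only [Fin.sum_univ_seven, reduceIte, φ₀, ω, ρ,
      mul_add, add_mul, mul_neg, neg_mul, mul_zero, zero_mul, add_zero, zero_add, neg_neg, neg_zero,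
      smul_mul_assoc, mul_smul_comm, smul_smul, smul_add, smul_neg, smul_zero, zero_smul,
      mul_assoc, εswap, εswap', εsq, εsq'] at h4
  have hs4 : (2*a 0 3 + 2*a 2 6 - 2*a 1 5 : ℝ) = 0 := by
    apply smul_M_eq_zero
    rw [M]
    linear_combination (norm := module) h4
  clear h4
  have h5 := h.2 (Pi.single 5 1)
  rw [ctrphi5] at h5
  simp (config := { decide := true }) only [Fin.sum_univ_seven, reduceIte, φ₀, ω, ρ,
      mul_add, add_mul, mul_neg, neg_mul, mul_zero, zero_mul, add_zero, zero_add, neg_neg, neg_zero,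
      smul_mul_assoc, mul_smul_comm, smul_smul, smul_add, smul_neg, smul_zero, zero_smul,
      mul_assoc, εswap, εswap', εsq, εsq'] at h5
  have hs5 : (-(2*a 0 6) + 2*a 2 3 + 2*a 1 4 : ℝ) = 0 := by
    apply smul_M_eq_zero
    rw [M]
    linear_combination (norm := module) h5
  clear h5
  have h6 := h.2 (Pi.single 6 1)
  rw [ctrphi6] at h6
  simp (config := { decide := true }) only [Fin.sum_univ_seven, reduceIte, φ₀, ω, ρ,
      mul_add, add_mul, mul_neg, neg_mul, mul_zero, zero_mul, add_zero, zero_add, neg_neg, neg_zero,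
      smul_mul_assoc, mul_smul_comm, smul_smul, smul_add, smul_neg, smul_zero, zero_smul,
      mul_assoc, εswap, εswap', εsq, εsq'] at h6
  have hs6 : (2*a 0 5 - 2*a 2 4 + 2*a 1 3 : ℝ) = 0 := by
    apply smul_M_eq_zero
    rw [M]
    linear_combination (norm := module) h6
  clear h6
  rw [vol7_eq, M]
  simp (config := { decide := true }) only [Fin.sum_univ_seven, reduceIte, φ₀, ω, ρ,
      mul_add, add_mul, mul_neg, neg_mul, mul_zero, zero_mul, add_zero, zero_add, neg_neg, neg_zero,
      smul_mul_assoc, mul_smul_comm, smul_smul, smul_add, smul_neg, smul_zero, zero_smul,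
      mul_assoc, εswap, εswap', εsq, εsq']
  match_scalars
  linear_combination ((2*a 1 2 + 2*a 3 4 + 2*a 5 6)/4) * hs0 + ((-(2*a 0 2) + 2*a 4 5 + 2*a 3 6)/4) * hs1 + ((2*a 0 1 - 2*a 4 6 + 2*a 3 5)/4) * hs2 +
    ((-(2*a 0 4) - 2*a 2 5 - 2*a 1 6)/4) * hs3 + ((2*a 0 3 + 2*a 2 6 - 2*a 1 5)/4) * hs4 + ((-(2*a 0 6) + 2*a 2 3 + 2*a 1 4)/4) * hs5 + ((2*a 0 5 - 2*a 2 4 + 2*a 1 3)/4) * hs6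


lemma ι_eq_sum (x : V7) : ExteriorAlgebra.ι ℝ x = ∑ i, x i • ε i := by
  have hx : x = ∑ i, x i • (Pi.single i 1 : V7) := by
    funext j
    simp [Finset.sum_apply, Pi.single_apply]
  conv_lhs => rw [hx]
  simp [ε]

lemma mem_span_pairs {α : E7} (h : α ∈ ⋀[ℝ]^2 V7) :
    ∃ a : Fin 7 → Fin 7 → ℝ, α = ∑ i, ∑ j, if i < j then a i j • (ε i * ε j) else 0 := by
  set T : Fin 7 × Fin 7 → E7 := fun p => if p.1 < p.2 then ε p.1 * ε p.2 else 0 with hT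
  have hTmem : ∀ i j : Fin 7, ε i * ε j ∈ Submodule.span ℝ (Set.range T) := by
    intro i j
    rcases lt_trichotomy i j with hij | rfl | hij
    · have : ε i * ε j = T (i, j) := by simp [hT, hij]
      rw [this]; exact Submodule.subset_span ⟨_, rfl⟩
    · rw [εsq]; exact zero_mem _
    · rw [εswap hij]
      refine neg_mem ?_
      have : ε j * ε i = T (j, i) := by simp [hT, hij]
      rw [this]; exact Submodule.subset_span ⟨_, rfl⟩
  have hspan : α ∈ Submodule.span ℝ (Set.range T) := by
    rw [← ExteriorAlgebra.ιMulti_span_fixedDegree] at h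
    refine Submodule.span_le.mpr ?_ h
    rintro _ ⟨v, rfl⟩
    have : ExteriorAlgebra.ιMulti ℝ 2 v
        = ExteriorAlgebra.ι ℝ (v 0) * ExteriorAlgebra.ι ℝ (v 1) := by
      simp [ExteriorAlgebra.ιMulti_apply, Matrix.vecTail, Function.comp]
    rw [this, ι_eq_sum (v 0), ι_eq_sum (v 1), Finset.sum_mul_sum]
    refine Submodule.sum_mem _ fun i _ => Submodule.sum_mem _ fun j _ => ?_
    rw [smul_mul_smul_comm]
    exact Submodule.smul_mem _ _ (hTmem i j)
  rw [Submodule.mem_span_range_iff_exists_fun] at hspan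
  obtain ⟨c, hc⟩ := hspan
  refine ⟨fun i j => if i < j then c (i, j) else 0, ?_⟩
  rw [← hc, Fintype.sum_prod_type]
  refine Finset.sum_congr rfl fun i _ => Finset.sum_congr rfl fun j _ => ?_
  by_cases hp : i < j <;> simp [hT, hp]

theorem stmt3 :
    (∀ a : Fin 7 → Fin 7 → ℝ,
      (∑ i, ∑ j, if i < j then a i j • (ε i * ε j) else 0) ∈ Λ14 →
      (∑ i, ∑ j, if i < j then a i j • (ε i * ε j) else 0) *
          (∑ i, ∑ j, if i < j then a i j • (ε i * ε j) else 0) * φ₀ =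
        (-(∑ i, ∑ j, if i < j then (a i j) ^ 2 else 0)) • vol7) ∧
    (∀ α ∈ Λ14, α ≠ 0 → ∃ c : ℝ, c < 0 ∧ α * α * φ₀ = c • vol7) := by
  constructor
  · exact key
  · rintro α ⟨h2, hv⟩ hne
    obtain ⟨a, rfl⟩ := mem_span_pairs h2
    refine ⟨-(∑ i, ∑ j, if i < j then (a i j) ^ 2 else 0), ?_, key a ⟨h2, hv⟩⟩
    rw [neg_lt, neg_zero]
    have hex : ∃ i j : Fin 7, i < j ∧ a i j ≠ 0 := by
      by_contra hc
      push_neg at hc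
      apply hne
      refine Finset.sum_eq_zero fun i _ => Finset.sum_eq_zero fun j _ => ?_
      by_cases hij : i < j
      · simp [hij, hc i j hij]
      · simp [hij]
    obtain ⟨i, j, hij, hne'⟩ := hex
    have hnn : ∀ k ∈ Finset.univ, (0:ℝ) ≤ ∑ l, if k < l then (a k l) ^ 2 else 0 :=
      fun k _ => Finset.sum_nonneg fun l _ => by positivity
    refine Finset.sum_pos' hnn ⟨i, Finset.mem_univ i, ?_⟩
    refine Finset.sum_pos' (fun l _ => by positivity) ⟨j, Finset.mem_univ j, ?_⟩
    simp only [hij, if_true]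
    positivity
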